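/- If f : Z_p → Q_p is continuous, then its Mahler coefficients a_n = ∑_{k=0}^{n} (-1)^{n-k} C(n,k) f(k) satisfy |a_n|_p → 0 as n → ∞, and f(x) = ∑_{n=0}^∞ a_n · C(x,n) for all x ∈ Z_p, where C(x,n) = x(x-1)···(x-n+1)/n!. -/

import Mathlib

open scoped fwdDiff


/-- The binomial polynomial C(x, n) = x(x-1)⋯(x-n+1)/n! evaluated at x ∈ ℚ_p. -/
noncomputable def binomPoly (p : ℕ) [Fact p.Prime] (x : ℚ_[p]) (n : ℕ) : ℚ_[p] :=
  (∏ i ∈ Finset.range n, (x - (i : ℚ_[p]))) / (n.factorial : ℚ_[p])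

lemma descPochhammer_smeval_prod {S : Type*} [CommRing S] (x : S) (n : ℕ) :
    (descPochhammer ℤ n).smeval x = ∏ i ∈ Finset.range n, (x - (i : S)) := by
  induction n with
  | zero => simp [descPochhammer_zero, Polynomial.smeval_one]
  | succ n ih =>
      rw [descPochhammer_succ_right, Polynomial.smeval_mul, ih, Polynomial.smeval_sub,
        Polynomial.smeval_X, Polynomial.smeval_natCast, Finset.prod_range_succ]
      simp [pow_zero, pow_one, nsmul_eq_mul]

lemma choose_eq_binomPoly (p : ℕ) [Fact p.Prime] (x : ℤ_[p]) (n : ℕ) :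
    ((Ring.choose x n : ℤ_[p]) : ℚ_[p]) = binomPoly p (x : ℚ_[p]) n := by
  have h := Ring.descPochhammer_eq_factorial_smul_choose (R := ℤ_[p]) x n
  rw [descPochhammer_smeval_prod] at h
  have h2 : ((∏ i ∈ Finset.range n, (x - (i : ℤ_[p])) : ℤ_[p]) : ℚ_[p])
      = ∏ i ∈ Finset.range n, ((x : ℚ_[p]) - (i : ℚ_[p])) := by
    rw [show ((∏ i ∈ Finset.range n, (x - (i : ℤ_[p])) : ℤ_[p]) : ℚ_[p])
        = (PadicInt.Coe.ringHom (p := p)) (∏ i ∈ Finset.range n, (x - (i : ℤ_[p]))) from rfl,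
      map_prod]
    refine Finset.prod_congr rfl fun i _ => ?_
    rfl
  rw [h] at h2
  rw [binomPoly, ← h2, nsmul_eq_mul]
  push_cast
  rw [eq_div_iff (by exact_mod_cast n.factorial_ne_zero)]
  ring

instance padicInt_isBoundedSMul_padic (p : ℕ) [Fact p.Prime] : IsBoundedSMul ℤ_[p] ℚ_[p] :=
  IsBoundedSMul.of_norm_smul_le fun r x => by
    rw [Algebra.smul_def, norm_mul]
    exact le_of_eq rfl

/-- Mahler's theorem: if f : ℤ_p → ℚ_p is continuous, its Mahler coefficients
aₙ = ∑_{k=0}^n (-1)^(n-k) C(n,k) f(k) tend to 0 in norm, and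
f(x) = ∑ₙ aₙ · C(x,n) for all x ∈ ℤ_p. -/
theorem stmt_16 (p : ℕ) [Fact p.Prime] (f : ℤ_[p] → ℚ_[p]) (hf : Continuous f)
    (a : ℕ → ℚ_[p])
    (ha : ∀ n, a n = ∑ k ∈ Finset.range (n + 1),
      (-1 : ℚ_[p]) ^ (n - k) * (n.choose k : ℚ_[p]) * f (k : ℤ_[p])) :
    Filter.Tendsto (fun n => ‖a n‖) Filter.atTop (nhds 0) ∧
    ∀ x : ℤ_[p], HasSum (fun n => a n * binomPoly p (x : ℚ_[p]) n) (f x) := by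
  set F : C(ℤ_[p], ℚ_[p]) := ⟨f, hf⟩ with hF
  have haF : ∀ n, a n = (fwdDiff (1 : ℤ_[p]))^[n] (⇑F) 0 := by
    intro n
    rw [fwdDiff_iter_eq_sum_shift, ha]
    refine Finset.sum_congr rfl fun k hk => ?_
    have : ((0 : ℤ_[p]) + k • (1 : ℤ_[p])) = (k : ℤ_[p]) := by simp
    rw [this, zsmul_eq_mul]
    push_cast
    ring_nf
    rfl
  constructor
  · have h := (PadicInt.fwdDiff_tendsto_zero F).norm
    rw [norm_zero] at h
    convert h using 2 with n
    rw [haF]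
  · intro x
    have h := (PadicInt.hasSum_mahler F).mapL (ContinuousMap.evalCLM ℚ_[p] x)
    have hx : (ContinuousMap.evalCLM ℚ_[p] x) F = f x := rfl
    rw [hx] at h
    convert h using 2 with n
    · rfl
    have : (ContinuousMap.evalCLM ℚ_[p] x) (PadicInt.mahlerTerm ((fwdDiff (1 : ℤ_[p]))^[n] (⇑F) 0) n)
        = PadicInt.mahlerTerm ((fwdDiff (1 : ℤ_[p]))^[n] (⇑F) 0) n x := rfl
    rw [this, PadicInt.mahlerTerm_apply, mahler_apply, Algebra.smul_def, PadicInt.algebraMap_apply,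
      choose_eq_binomPoly, haF n, mul_comm]
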